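/- Let g, Δ, ε, λ be real numbers, μ := (λ+g²)² − 4g²(λ+g²) − Δ², and set a := −(λ+g²−1+ε), α := −½ − (λ+g²+ε)/2, β := 4g², γ := −(λ+g²−ε)/2, C := μ − 4εg² − ε², and Λ̃ := β(a/2 + α) + γ(a − ½). Then for every real x > 0 with x ≠ 1 and every twice continuously differentiable f : (0,∞) → ℝ, one has x^{−(a−1/2)/2} · ((ϖ_a(K) − Λ̃)(t ↦ t^{(a−1/2)/2} f(t)))(x) = x(x−1)·f″(x) + [−4g²·x(x−1) − ((λ+g²) + ε)(x−1) + (1 − (λ+g²) + ε)x]·f′(x) + [4g²(λ+g²−1+ε)x + μ − 4εg² − ε²]·f(x); the right-hand side is x(x−1) times the confluent Heun operator H₂^ε(λ) applied to f. -/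

import Mathlib

open Real

/-- The first order operator `B : g ↦ −g′ + (½(a−½)x⁻¹ + β)·g`. -/
noncomputable def Bop (a β : ℝ) (g : ℝ → ℝ) : ℝ → ℝ := fun x =>
  -deriv g x + ((1 / 2) * (a - 1 / 2) * x⁻¹ + β) * g x

/-- The first order operator `A : h ↦ x·h′ + ¼·h − x²·h′ − ½(a+½)x·h + α·h`. -/
noncomputable def Aop (a α : ℝ) (h : ℝ → ℝ) : ℝ → ℝ := fun x =>
  x * deriv h x + (1 / 4) * h x - x ^ 2 * deriv h x - (1 / 2) * (a + 1 / 2) * x * h x + α * h x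

/-- The second order operator `ϖ_a(K(α,β,γ;C)) : g ↦ A(Bg) + 2γ·x·g′ + C·g`. -/
noncomputable def piK (a α β γ C : ℝ) (g : ℝ → ℝ) : ℝ → ℝ := fun x =>
  Aop a α (Bop a β g) x + 2 * γ * x * deriv g x + C * g x

/-- The constant `λ_a(α,β,γ) = β(a/2 + α) + γ(a − ½)`. -/
noncomputable def lamConst (a α β γ : ℝ) : ℝ := β * (a / 2 + α) + γ * (a - 1 / 2)

/-- The confluent Heun picture of `ϖ_a(K) − Λ̃` for the second choice of parameters:
conjugation by `x^{(a−1/2)/2}` turns it into `x(x−1)` times the confluent Heun operator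
`H₂^ε(λ)` of the asymmetric quantum Rabi model. -/
theorem piK_confluentHeun_two (g Δ ε lam : ℝ)
    (μ : ℝ) (hμ : μ = (lam + g ^ 2) ^ 2 - 4 * g ^ 2 * (lam + g ^ 2) - Δ ^ 2)
    (a α β γ C Λ : ℝ)
    (ha : a = -(lam + g ^ 2 - 1 + ε))
    (hα : α = -(1 / 2) - (lam + g ^ 2 + ε) / 2)
    (hβ : β = 4 * g ^ 2)
    (hγ : γ = -((lam + g ^ 2 - ε) / 2))
    (hC : C = μ - 4 * ε * g ^ 2 - ε ^ 2)
    (hΛ : Λ = β * (a / 2 + α) + γ * (a - 1 / 2))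
    (x : ℝ) (hx : 0 < x) (hx1 : x ≠ 1)
    (f : ℝ → ℝ) (hf : ContDiffOn ℝ 2 f (Set.Ioi (0 : ℝ))) :
    x ^ (-(a - 1 / 2) / 2) *
        (piK a α β γ C (fun t : ℝ => t ^ ((a - 1 / 2) / 2) * f t) x -
          Λ * ((fun t : ℝ => t ^ ((a - 1 / 2) / 2) * f t) x)) =
      x * (x - 1) * deriv (deriv f) x +
        (-(4 * g ^ 2) * (x * (x - 1)) - ((lam + g ^ 2) + ε) * (x - 1) +
          (1 - (lam + g ^ 2) + ε) * x) * deriv f x +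
        (4 * g ^ 2 * (lam + g ^ 2 - 1 + ε) * x + μ - 4 * ε * g ^ 2 - ε ^ 2) * f x := by
  have hx0 : x ≠ 0 := ne_of_gt hx
  have hxmem : x ∈ Set.Ioi (0:ℝ) := hx
  have hopen : IsOpen (Set.Ioi (0:ℝ)) := isOpen_Ioi
  set e : ℝ := (a - 1 / 2) / 2 with he
  have hfd : ∀ t ∈ Set.Ioi (0:ℝ), HasDerivAt f (deriv f t) t := fun t ht =>
    ((hf.differentiableOn (by norm_num)).differentiableAt (hopen.mem_nhds ht)).hasDerivAt
  have hf1 : ContDiffOn ℝ 1 (deriv f) (Set.Ioi 0) := hf.deriv_of_isOpen hopen (by norm_num)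
  have hfd1 : ∀ t ∈ Set.Ioi (0:ℝ), HasDerivAt (deriv f) (deriv (deriv f) t) t := fun t ht =>
    ((hf1.differentiableOn one_ne_zero).differentiableAt (hopen.mem_nhds ht)).hasDerivAt
  have hrp : ∀ (p : ℝ), ∀ t ∈ Set.Ioi (0:ℝ),
      HasDerivAt (fun s : ℝ => s ^ p) (p * t ^ (p - 1)) t :=
    fun p t ht => Real.hasDerivAt_rpow_const (Or.inl (ne_of_gt ht))
  set P : ℝ → ℝ := fun t => t ^ e * f t with hPdef
  have hPd : ∀ t ∈ Set.Ioi (0:ℝ),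
      HasDerivAt P (e * t ^ (e - 1) * f t + t ^ e * deriv f t) t := fun t ht => by
    simpa [mul_assoc] using (hrp e t ht).fun_mul (hfd t ht)
  set Q : ℝ → ℝ := fun t => e * t ^ (e - 1) * f t + t ^ e * deriv f t with hQdef
  have hdP : ∀ t ∈ Set.Ioi (0:ℝ), deriv P t = Q t := fun t ht => (hPd t ht).deriv
  have hQd : HasDerivAt Q
      (e * ((e - 1) * x ^ (e - 1 - 1)) * f x + e * x ^ (e - 1) * deriv f x
        + (e * x ^ (e - 1) * deriv f x + x ^ e * deriv (deriv f) x)) x := by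
    have h1 : HasDerivAt (fun t : ℝ => e * t ^ (e - 1) * f t)
        (e * ((e - 1) * x ^ (e - 1 - 1)) * f x + e * x ^ (e - 1) * deriv f x) x := by
      simpa [mul_assoc] using (((hrp (e - 1) x hxmem).const_mul e).fun_mul (hfd x hxmem))
    have h2 : HasDerivAt (fun t : ℝ => t ^ e * deriv f t)
        (e * x ^ (e - 1) * deriv f x + x ^ e * deriv (deriv f) x) x := by
      simpa [mul_assoc] using ((hrp e x hxmem).fun_mul (hfd1 x hxmem))
    simpa [hQdef] using h1.fun_add h2
  set R : ℝ → ℝ := fun t => -Q t + ((1 / 2) * (a - 1 / 2) * t⁻¹ + β) * P t with hRdef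
  have hBR : Bop a β P =ᶠ[nhds x] R := by
    refine Filter.eventuallyEq_of_mem (hopen.mem_nhds hxmem) (fun t ht => ?_)
    simp only [Bop, hRdef, hdP t ht]
  have hinv : HasDerivAt (fun t : ℝ => (1 / 2) * (a - 1 / 2) * t⁻¹ + β)
      ((1 / 2) * (a - 1 / 2) * (-(x ^ 2)⁻¹)) x :=
    ((hasDerivAt_inv hx0).const_mul ((1 / 2) * (a - 1 / 2))).add_const β
  have hRd : HasDerivAt R
      (-(e * ((e - 1) * x ^ (e - 1 - 1)) * f x + e * x ^ (e - 1) * deriv f x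
          + (e * x ^ (e - 1) * deriv f x + x ^ e * deriv (deriv f) x))
        + ((1 / 2) * (a - 1 / 2) * (-(x ^ 2)⁻¹) * P x
          + ((1 / 2) * (a - 1 / 2) * x⁻¹ + β)
            * (e * x ^ (e - 1) * f x + x ^ e * deriv f x))) x :=
    hQd.neg.add (hinv.mul (hPd x hxmem))
  have hdB : deriv (Bop a β P) x = deriv R x := hBR.deriv_eq
  have hBx : Bop a β P x = R x := hBR.eq_of_nhds
  rw [show -(a - 1 / 2) / 2 = -e by rw [he]; ring]
  simp only [piK, Aop]
  rw [hdB, hBx, hRd.deriv, hdP x hxmem]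
  simp only [hRdef, hQdef, hPdef]
  have h1 : x ^ (e - 1) = x ^ e * x⁻¹ := by
    rw [Real.rpow_sub hx, Real.rpow_one]; ring
  have h2 : x ^ (e - 1 - 1) = x ^ e * (x⁻¹ * x⁻¹) := by
    rw [Real.rpow_sub hx, Real.rpow_sub hx, Real.rpow_one]; ring
  have h3 : x ^ (-e) = (x ^ e)⁻¹ := Real.rpow_neg hx.le e
  rw [h1, h2, h3]
  have hyne : x ^ e ≠ 0 := (Real.rpow_pos_of_pos hx e).ne'
  subst hμ hC hΛ hα hβ hγ ha
  rw [he] at hyne ⊢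
  field_simp
  ring
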